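/- Let F be a real (formally real) field of characteristic not 2. If the Pythagoras number p(F) satisfies p(F) > 2^{ℓ-1} for some ℓ ≥ 1, then there exists an anisotropic torsion ℓ-fold Pfister form over F; in particular the torsion part of the ℓ-th power of the fundamental ideal I^ℓ_t F is nonzero and u(F) ≥ 2^ℓ. -/

import Mathlib

open scoped BigOperators ENat Classical

namespace QF

variable {F : Type*} [Field F]

/-- Value of the diagonal quadratic form with coefficients `d` at the vector `v`. -/
def qval {ι : Type*} [Fintype ι] (d : ι → F) (v : ι → F) : F :=
  ∑ i, d i * v i ^ 2

/-- A (diagonal) quadratic form is isotropic if it has a nontrivial zero. -/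
def Isotropic {ι : Type*} [Fintype ι] (d : ι → F) : Prop :=
  ∃ v : ι → F, v ≠ 0 ∧ qval d v = 0

def Anisotropic {ι : Type*} [Fintype ι] (d : ι → F) : Prop :=
  ¬ Isotropic d

/-- Orthogonal sum of `n` copies of the form `d`. -/
def copies (n : ℕ) {ι : Type*} (d : ι → F) : Fin n × ι → F :=
  fun p => d p.2

/-- Orthogonal sum of two diagonal forms. -/
def sumForm {ι κ : Type*} (d : ι → F) (e : κ → F) : ι ⊕ κ → F :=
  Sum.elim d e

/-- A form is weakly isotropic if some multiple `n × q`, `n ≥ 1`, is isotropic. -/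
def WeaklyIsotropic {ι : Type*} [Fintype ι] (d : ι → F) : Prop :=
  ∃ n : ℕ, 1 ≤ n ∧ Isotropic (copies n d)

/-- Isometry of diagonal quadratic forms. -/
def Isometric {ι κ : Type*} [Fintype ι] [Fintype κ] (d : ι → F) (e : κ → F) : Prop :=
  ∃ f : (ι → F) ≃ₗ[F] (κ → F), ∀ v, qval e (f v) = qval d v

/-- The hyperbolic form of dimension `2m`, i.e. `m × ⟨1,-1⟩`. -/
def hypForm (F : Type*) [Field F] (m : ℕ) : Fin m ⊕ Fin m → F :=
  Sum.elim (fun _ => (1 : F)) (fun _ => (-1 : F))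

def Hyperbolic {ι : Type*} [Fintype ι] (d : ι → F) : Prop :=
  ∃ m : ℕ, Isometric d (hypForm F m)

/-- A form is torsion if some multiple `n × q`, `n ≥ 1`, is hyperbolic. -/
def Torsion {ι : Type*} [Fintype ι] (d : ι → F) : Prop :=
  ∃ n : ℕ, 1 ≤ n ∧ Hyperbolic (copies n d)

/-- `e` is a subform of `d` : `d ≅ e ⊥ τ` for some form `τ`. -/
def IsSubform {ι κ : Type*} [Fintype ι] [Fintype κ] (e : κ → F) (d : ι → F) : Prop :=
  ∃ (m : ℕ) (τ : Fin m → F), Isometric d (sumForm e τ)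

/-- `e` is similar to a subform of `d`. -/
def SimSubform {ι κ : Type*} [Fintype ι] [Fintype κ] (e : κ → F) (d : ι → F) : Prop :=
  ∃ c : F, c ≠ 0 ∧ IsSubform (fun i => c * e i) d

/-- The `ℓ`-fold Pfister form `⟨⟨a₁,…,a_ℓ⟩⟩ = ⊗ᵢ ⟨1, aᵢ⟩`, with coefficient
`∏ i ∈ S, a i` at the index `S : Finset (Fin ℓ)`. -/
def pfister {ℓ : ℕ} (a : Fin ℓ → F) : Finset (Fin ℓ) → F :=
  fun S => ∏ i ∈ S, a i

/-- `d` is a Pfister neighbor of the `ℓ`-fold Pfister form `⟨⟨a⟩⟩`. -/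
def IsPfisterNeighbor {ι : Type*} [Fintype ι] {ℓ : ℕ} (d : ι → F) (a : Fin ℓ → F) : Prop :=
  2 ^ ℓ < 2 * Fintype.card ι ∧ SimSubform d (pfister a)

/-- Witt equivalence of diagonal forms. -/
def WittEquiv {ι κ : Type*} [Fintype ι] [Fintype κ] (d : ι → F) (e : κ → F) : Prop :=
  ∃ m k : ℕ, Isometric (sumForm d (hypForm F m)) (sumForm e (hypForm F k))

/-- An ordering of the field `F`, given by its positive cone. -/
structure FieldOrdering (F : Type*) [Field F] where
  P : Set F
  add_mem : ∀ x y : F, x ∈ P → y ∈ P → x + y ∈ P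
  mul_mem : ∀ x y : F, x ∈ P → y ∈ P → x * y ∈ P
  total : ∀ x : F, x ∈ P ∨ -x ∈ P
  neg_one_notMem : (-1 : F) ∉ P

/-- The signature of a (nondegenerate diagonal) form at an ordering. -/
noncomputable def sgn {ι : Type*} [Fintype ι] (P : FieldOrdering F) (d : ι → F) : ℤ :=
  ∑ i, if d i ∈ P.P then 1 else -1

/-- The Harrison set `H(a) = {P : a >_P 0}`. -/
def Harrison (F : Type*) [Field F] (a : F) : Set (FieldOrdering F) :=
  {P | a ∈ P.P ∧ -a ∉ P.P}

/-- The Harrison topology on the space of orderings. -/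
instance orderingTopology (F : Type*) [Field F] : TopologicalSpace (FieldOrdering F) :=
  .generateFrom {s | ∃ a : F, a ≠ 0 ∧ s = Harrison F a}

/-- `F` satisfies SAP: every clopen subset of the space of orderings is a Harrison set. -/
def IsSAP (F : Type*) [Field F] : Prop :=
  ∀ s : Set (FieldOrdering F), IsClopen s → ∃ a : F, a ≠ 0 ∧ s = Harrison F a

/-- Totally indefinite: indefinite at every ordering of `F`. -/
def TotallyIndefinite {ι : Type*} [Fintype ι] (d : ι → F) : Prop :=
  ∀ P : FieldOrdering F, (sgn P d).natAbs < Fintype.card ι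

/-- The `u`-invariant: supremum of dimensions of anisotropic torsion forms. -/
noncomputable def uInv (F : Type*) [Field F] : ℕ∞ :=
  sSup {n : ℕ∞ | ∃ (m : ℕ) (d : Fin m → F), Anisotropic d ∧ Torsion d ∧ n = m}

/-- The Hasse number `ũ`: supremum of dimensions of anisotropic totally indefinite forms. -/
noncomputable def hasseNumber (F : Type*) [Field F] : ℕ∞ :=
  sSup {n : ℕ∞ | ∃ (m : ℕ) (d : Fin m → F), (∀ i, d i ≠ 0) ∧ Anisotropic d ∧
    TotallyIndefinite d ∧ n = m}

/-- `x` is a sum of `m` squares. -/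
def IsSumSqOf (m : ℕ) (x : F) : Prop :=
  ∃ f : Fin m → F, x = ∑ i, f i ^ 2

/-- The Pythagoras number of `F`. -/
noncomputable def pythNumber (F : Type*) [Field F] : ℕ∞ :=
  sInf {p : ℕ∞ | ∃ m : ℕ, p = m ∧ ∀ x : F, IsSumSq x → IsSumSqOf m x}

/-- Property `S₁`: for every torsion binary form `β` there is `n ≥ 1` with
`(n × ⟨1⟩) ⊥ β` isotropic. -/
def HasS1 (F : Type*) [Field F] : Prop :=
  ∀ β : Fin 2 → F, (∀ i, β i ≠ 0) → Torsion β →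
    ∃ n : ℕ, 1 ≤ n ∧ Isotropic (sumForm (fun _ : Fin n => (1 : F)) β)

/-- The Pythagorean closure of `F` inside an algebraic closure: the smallest
subfield containing `F` in which every sum of two squares is a square. -/
noncomputable def pythClosure (F : Type*) [Field F] : Subfield (AlgebraicClosure F) :=
  sInf {K | Set.range (algebraMap F (AlgebraicClosure F)) ⊆ K ∧
    ∀ x ∈ K, ∀ y ∈ K, ∃ z ∈ K, z ^ 2 = x ^ 2 + y ^ 2}

/-- The form `d` over `F` becomes isotropic over the Pythagorean closure of `F`. -/
def IsotropicOverPyth {ι : Type*} [Fintype ι] (d : ι → F) : Prop :=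
  ∃ v : ι → AlgebraicClosure F, (∀ i, v i ∈ pythClosure F) ∧ v ≠ 0 ∧
    ∑ i, algebraMap F (AlgebraicClosure F) (d i) * v i ^ 2 = 0

end QF

namespace QF

variable {F : Type*} [Field F]

-- ===== helpers =====
variable {ι κ μ ι' κ' : Type*} [Fintype ι] [Fintype κ] [Fintype μ] [Fintype ι'] [Fintype κ']

theorem Isometric.refl (d : ι → F) : Isometric d d :=
  ⟨LinearEquiv.refl F (ι → F), fun _ => rfl⟩

theorem Isometric.symm {d : ι → F} {e : κ → F} (h : Isometric d e) : Isometric e d := by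
  obtain ⟨f, hf⟩ := h
  exact ⟨f.symm, fun w => by rw [← hf (f.symm w), f.apply_symm_apply]⟩

theorem Isometric.trans {d : ι → F} {e : κ → F} {g : μ → F}
    (h1 : Isometric d e) (h2 : Isometric e g) : Isometric d g := by
  obtain ⟨f1, hf1⟩ := h1
  obtain ⟨f2, hf2⟩ := h2
  exact ⟨f1.trans f2, fun v => by rw [LinearEquiv.trans_apply, hf2, hf1]⟩

theorem isometric_reindex (e : ι ≃ κ) (d : κ → F) :
    Isometric (fun i => d (e i)) d := by
  refine ⟨(LinearEquiv.funCongrLeft F F e.symm), fun v => ?_⟩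
  have : ∀ v : ι → F, (LinearEquiv.funCongrLeft F F e.symm) v = v ∘ e.symm := fun _ => rfl
  rw [this]
  unfold qval
  exact (Fintype.sum_equiv e _ _ (fun i => by simp)).symm

theorem qval_sumForm (d : ι → F) (e : κ → F) (v : ι ⊕ κ → F) :
    qval (sumForm d e) v = qval d (v ∘ Sum.inl) + qval e (v ∘ Sum.inr) := by
  unfold qval sumForm
  rw [Fintype.sum_sum_type]
  rfl

theorem Isometric.sumCongr {d : ι → F} {d' : ι' → F} {e : κ → F} {e' : κ' → F}
    (h1 : Isometric d d') (h2 : Isometric e e') :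
    Isometric (sumForm d e) (sumForm d' e') := by
  obtain ⟨f, hf⟩ := h1
  obtain ⟨g, hg⟩ := h2
  refine ⟨(LinearEquiv.sumArrowLequivProdArrow ι κ F F).trans
    ((f.prodCongr g).trans (LinearEquiv.sumArrowLequivProdArrow ι' κ' F F).symm), fun v => ?_⟩
  have hval : ((LinearEquiv.sumArrowLequivProdArrow ι κ F F).trans
      ((f.prodCongr g).trans (LinearEquiv.sumArrowLequivProdArrow ι' κ' F F).symm)) v
      = Sum.elim (f (v ∘ Sum.inl)) (g (v ∘ Sum.inr)) := by
    rfl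
  rw [hval, qval_sumForm, qval_sumForm]
  have h1 : (Sum.elim (f (v ∘ Sum.inl)) (g (v ∘ Sum.inr)) ∘ Sum.inl) = f (v ∘ Sum.inl) := rfl
  have h2' : (Sum.elim (f (v ∘ Sum.inl)) (g (v ∘ Sum.inr)) ∘ Sum.inr) = g (v ∘ Sum.inr) := rfl
  rw [h1, h2', hf, hg]

theorem Isometric.smul {d : ι → F} {e : κ → F} (t : F) (h : Isometric d e) :
    Isometric (fun i => t * d i) (fun j => t * e j) := by
  obtain ⟨f, hf⟩ := h
  refine ⟨f, fun v => ?_⟩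
  unfold qval at *
  simp only [mul_assoc, ← Finset.mul_sum]
  rw [hf v]


variable {ι κ μ : Type*} [Fintype ι] [Fintype κ] [Fintype μ]

theorem Isometric.tensorCongr (ρ : μ → F) {d : ι → F} {e : κ → F} (h : Isometric d e) :
    Isometric (fun p : μ × ι => ρ p.1 * d p.2) (fun p : μ × κ => ρ p.1 * e p.2) := by
  obtain ⟨f, hf⟩ := h
  refine ⟨(LinearEquiv.curry F F μ ι).trans
    ((LinearEquiv.piCongrRight (fun _ : μ => f)).trans (LinearEquiv.curry F F μ κ).symm),
    fun v => ?_⟩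
  have hval : ∀ p : μ × κ, ((LinearEquiv.curry F F μ ι).trans
      ((LinearEquiv.piCongrRight (fun _ : μ => f)).trans (LinearEquiv.curry F F μ κ).symm)) v p
      = f (fun i => v (p.1, i)) p.2 := fun p => rfl
  unfold qval
  simp only [hval]
  rw [Fintype.sum_prod_type, Fintype.sum_prod_type]
  refine Finset.sum_congr rfl fun j _ => ?_
  simp only [mul_assoc, ← Finset.mul_sum]
  congr 1
  exact hf (fun i => v (j, i))

noncomputable def blockEquiv (a b : F) (hc : a + b ≠ 0) {ι : Type*} :
    ((ι ⊕ ι) → F) ≃ₗ[F] ((ι ⊕ ι) → F) where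
  toFun w := Sum.elim (fun i => w (Sum.inl i) + b * w (Sum.inr i))
    (fun i => w (Sum.inl i) - a * w (Sum.inr i))
  map_add' x y := by funext p; rcases p with i | i <;> simp <;> ring
  map_smul' t x := by funext p; rcases p with i | i <;> simp <;> ring
  invFun v := Sum.elim (fun i => (a * v (Sum.inl i) + b * v (Sum.inr i)) / (a + b))
    (fun i => (v (Sum.inl i) - v (Sum.inr i)) / (a + b))
  left_inv w := by
    funext p; rcases p with i | i <;> show _ / (a + b) = _ <;>
      rw [div_eq_iff hc] <;> simp only [Sum.elim_inl, Sum.elim_inr] <;> ring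
  right_inv v := by
    funext p; rcases p with i | i
    · show (a * v (Sum.inl i) + b * v (Sum.inr i)) / (a + b)
        + b * ((v (Sum.inl i) - v (Sum.inr i)) / (a + b)) = v (Sum.inl i)
      field_simp
      ring
    · show (a * v (Sum.inl i) + b * v (Sum.inr i)) / (a + b)
        - a * ((v (Sum.inl i) - v (Sum.inr i)) / (a + b)) = v (Sum.inr i)
      field_simp
      ring

/-- the key binary transformation lemma -/
theorem blockIso (ψ : ι → F) (a b : F) (hc : a + b ≠ 0) :
    Isometric (sumForm (fun i => (a + b) * ψ i) (fun i => a * b * (a + b) * ψ i))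
              (sumForm (fun i => a * ψ i) (fun i => b * ψ i)) := by
  refine ⟨blockEquiv a b hc, fun w => ?_⟩
  rw [show (blockEquiv a b hc) w = Sum.elim (fun i => w (Sum.inl i) + b * w (Sum.inr i))
      (fun i => w (Sum.inl i) - a * w (Sum.inr i)) from rfl]
  rw [qval_sumForm, qval_sumForm]
  unfold qval
  rw [← Finset.sum_add_distrib, ← Finset.sum_add_distrib]
  refine Finset.sum_congr rfl fun i _ => ?_
  show a * ψ i * (w (Sum.inl i) + b * w (Sum.inr i)) ^ 2
      + b * ψ i * (w (Sum.inl i) - a * w (Sum.inr i)) ^ 2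
      = (a + b) * ψ i * w (Sum.inl i) ^ 2 + a * b * (a + b) * ψ i * w (Sum.inr i) ^ 2
  ring

-- ===== sums of squares utilities =====

theorem isSumSqOf_zero (m : ℕ) : IsSumSqOf m (0 : F) :=
  ⟨fun _ => 0, by simp⟩

theorem IsSumSqOf.add {m n : ℕ} {a b : F} (ha : IsSumSqOf m a) (hb : IsSumSqOf n b) :
    IsSumSqOf (m + n) (a + b) := by
  obtain ⟨f, hf⟩ := ha
  obtain ⟨g, hg⟩ := hb
  refine ⟨Fin.append f g, ?_⟩
  rw [Fin.sum_univ_add]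
  simp [Fin.append_left, Fin.append_right, hf, hg]

theorem IsSumSqOf.mono {m n : ℕ} {a : F} (ha : IsSumSqOf m a) (h : m ≤ n) :
    IsSumSqOf n a := by
  have := ha.add (isSumSqOf_zero (n - m) (F := F))
  rwa [add_zero, Nat.add_sub_cancel' h] at this

theorem IsSumSqOf.split {m n : ℕ} {c : F} (h : IsSumSqOf (m + n) c) :
    ∃ a b : F, IsSumSqOf m a ∧ IsSumSqOf n b ∧ c = a + b := by
  obtain ⟨f, hf⟩ := h
  refine ⟨∑ i : Fin m, f (Fin.castAdd n i) ^ 2, ∑ i : Fin n, f (Fin.natAdd m i) ^ 2,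
    ⟨_, rfl⟩, ⟨_, rfl⟩, ?_⟩
  rw [hf, Fin.sum_univ_add]

theorem IsSumSqOf.sq_mul {m : ℕ} {a : F} (t : F) (ha : IsSumSqOf m a) :
    IsSumSqOf m (t ^ 2 * a) := by
  obtain ⟨f, hf⟩ := ha
  refine ⟨fun i => t * f i, ?_⟩
  rw [hf, Finset.mul_sum]
  exact Finset.sum_congr rfl fun i _ => by ring

theorem IsSumSq.exists_isSumSqOf {x : F} (h : IsSumSq x) : ∃ N, IsSumSqOf N x := by
  induction h with
  | zero => exact ⟨0, isSumSqOf_zero 0⟩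
  | sq_add a hS ih =>
    obtain ⟨N, f, hf⟩ := ih
    exact ⟨N + 1, Fin.cons a f, by
      rw [Fin.sum_univ_succ]
      simp [hf]
      ring⟩

theorem isSumSq_sum {γ : Type*} (s : Finset γ) (f : γ → F) :
    IsSumSq (∑ i ∈ s, f i ^ 2) := by
  classical
  induction s using Finset.induction with
  | empty => simpa using IsSumSq.zero
  | @insert x s hx ih =>
    rw [Finset.sum_insert hx, show (f x ^ 2) = f x * f x from sq (f x)]
    exact IsSumSq.sq_add _ ih

-- ===== roundness of the 2^k-dimensional all-ones Pfister form =====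

theorem round : ∀ k : ℕ, ∀ c : F, c ≠ 0 → IsSumSqOf (2 ^ k) c →
    Isometric (fun _ : Fin (2 ^ k) => (1 : F)) (fun _ : Fin (2 ^ k) => c) := by
  intro k
  induction k with
  | zero =>
    intro c hc h
    obtain ⟨f, hf⟩ := h
    have hc' : c = f 0 ^ 2 := by rw [hf]; simp
    have hf0 : f 0 ≠ 0 := fun h0 => hc (by rw [hc', h0]; ring)
    refine ⟨LinearEquiv.smulOfNeZero F _ _ (inv_ne_zero hf0), fun v => ?_⟩
    unfold qval
    refine Finset.sum_congr rfl fun i _ => ?_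
    rw [show (LinearEquiv.smulOfNeZero F _ _ (inv_ne_zero hf0)) v i = (f 0)⁻¹ * v i from rfl]
    rw [hc']
    field_simp
  | succ k ih =>
    intro c hc h
    have mult : ∀ x y : F, IsSumSqOf (2 ^ k) x → IsSumSqOf (2 ^ k) y → y ≠ 0 →
        IsSumSqOf (2 ^ k) (x * y) := by
      intro x y hx hy hy0
      obtain ⟨g, hg⟩ := ih y hy0 hy
      obtain ⟨f, hf⟩ := hx
      have hx' : qval (fun _ : Fin (2 ^ k) => (1 : F)) f = x := by
        unfold qval; rw [hf]; exact Finset.sum_congr rfl fun i _ => by ring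
      have h2 : qval (fun _ : Fin (2 ^ k) => y) (g f) = x := by rw [hg f, hx']
      refine ⟨fun i => y * g f i, ?_⟩
      have h3 : ∑ i, (y * g f i) ^ 2 = y * qval (fun _ : Fin (2 ^ k) => y) (g f) := by
        unfold qval
        rw [Finset.mul_sum]
        exact Finset.sum_congr rfl fun i _ => by ring
      rw [h3, h2, mul_comm]
    have h' : IsSumSqOf (2 ^ k + 2 ^ k) c := by
      have e2 : 2 ^ (k + 1) = 2 ^ k + 2 ^ k := by ring
      rwa [e2] at h
    obtain ⟨a, b, ha, hb, hab⟩ := h'.split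
    have e : Fin (2 ^ (k + 1)) ≃ (Fin (2 ^ k) ⊕ Fin (2 ^ k)) :=
      (finCongr (by ring)).trans finSumFinEquiv.symm
    have const_eq : ∀ r : F, (fun _ : Fin (2 ^ k) ⊕ Fin (2 ^ k) => r)
        = sumForm (fun _ : Fin (2 ^ k) => r) (fun _ : Fin (2 ^ k) => r) := by
      intro r; funext p; rcases p with i | i <;> rfl
    have R1 : Isometric (fun _ : Fin (2 ^ (k + 1)) => (1 : F))
        (fun _ : Fin (2 ^ k) ⊕ Fin (2 ^ k) => (1 : F)) := isometric_reindex e _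
    have R2 : Isometric (fun _ : Fin (2 ^ (k + 1)) => c)
        (fun _ : Fin (2 ^ k) ⊕ Fin (2 ^ k) => c) := isometric_reindex e _
    have core : Isometric (fun _ : Fin (2 ^ k) ⊕ Fin (2 ^ k) => (1 : F))
        (fun _ : Fin (2 ^ k) ⊕ Fin (2 ^ k) => c) := by
      rw [const_eq, const_eq]
      by_cases hb0 : b = 0
      · have hca : IsSumSqOf (2 ^ k) c := by rw [hab, hb0, add_zero]; exact ha
        exact (ih c hc hca).sumCongr (ih c hc hca)
      by_cases ha0 : a = 0
      · have hcb : IsSumSqOf (2 ^ k) c := by rw [hab, ha0, zero_add]; exact hb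
        exact (ih c hc hcb).sumCongr (ih c hc hcb)
      · subst hab
        have hcx : a + b ≠ 0 := hc
        have I0 : Isometric (sumForm (fun _ : Fin (2 ^ k) => (1 : F)) fun _ : Fin (2 ^ k) => (1 : F))
            (sumForm (fun _ : Fin (2 ^ k) => a) fun _ : Fin (2 ^ k) => b) :=
          (ih a ha0 ha).sumCongr (ih b hb0 hb)
        have B := blockIso (fun _ : Fin (2 ^ k) => (1 : F)) a b hcx
        simp only [mul_one] at B
        have K := (ih (a * b) (mul_ne_zero ha0 hb0) (mult a b ha hb hb0)).smul (a + b)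
        simp only [mul_one] at K
        have K' : Isometric (fun _ : Fin (2 ^ k) => a * b * (a + b))
            (fun _ : Fin (2 ^ k) => a + b) := by
          have hre : (fun _ : Fin (2 ^ k) => (a + b) * (a * b))
              = (fun _ : Fin (2 ^ k) => a * b * (a + b)) := by funext i; ring
          rw [hre] at K
          exact K.symm
        exact I0.trans (B.symm.trans ((Isometric.refl _).sumCongr K'))
    exact R1.trans (core.trans R2.symm)


theorem round' {ι : Type*} [Fintype ι] (k : ℕ) (hcard : Fintype.card ι = 2 ^ k) {c : F}
    (hc : c ≠ 0) (h : IsSumSqOf (2 ^ k) c) :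
    Isometric (fun _ : ι => (1 : F)) (fun _ : ι => c) := by
  have e : ι ≃ Fin (2 ^ k) := Fintype.equivFinOfCardEq hcard
  have R1 : Isometric (fun _ : ι => (1 : F)) (fun _ : Fin (2 ^ k) => (1 : F)) :=
    isometric_reindex e _
  have R2 : Isometric (fun _ : ι => c) (fun _ : Fin (2 ^ k) => c) :=
    isometric_reindex e _
  exact R1.trans ((round k c hc h).trans R2.symm)

theorem isSumSqOf_mul (k : ℕ) {a b : F} (ha : IsSumSqOf (2 ^ k) a) (hb : IsSumSqOf (2 ^ k) b)
    (hb0 : b ≠ 0) : IsSumSqOf (2 ^ k) (a * b) := by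
  obtain ⟨g, hg⟩ := round k b hb0 hb
  obtain ⟨f, hf⟩ := ha
  have hx' : qval (fun _ : Fin (2 ^ k) => (1 : F)) f = a := by
    unfold qval; rw [hf]; exact Finset.sum_congr rfl fun i _ => by ring
  have h2 : qval (fun _ : Fin (2 ^ k) => b) (g f) = a := by rw [hg f, hx']
  refine ⟨fun i => b * g f i, ?_⟩
  have h3 : ∑ i, (b * g f i) ^ 2 = b * qval (fun _ : Fin (2 ^ k) => b) (g f) := by
    unfold qval
    rw [Finset.mul_sum]
    exact Finset.sum_congr rfl fun i _ => by ring
  rw [h3, h2, mul_comm]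

theorem Isometric.isotropic {d : ι → F} {e : κ → F} (h : Isometric d e) (hi : Isotropic d) :
    Isotropic e := by
  obtain ⟨f, hf⟩ := h
  obtain ⟨v, hv, h0⟩ := hi
  refine ⟨f v, fun hz => hv ?_, by rw [hf, h0]⟩
  have := congrArg f.symm hz
  rwa [f.symm_apply_apply, map_zero] at this

theorem Isometric.anisotropic {d : ι → F} {e : κ → F} (h : Isometric d e) (he : Anisotropic e) :
    Anisotropic d := fun hi => he (h.isotropic hi)

theorem Isometric.copiesCongr {d : ι → F} {e : κ → F} (n : ℕ) (h : Isometric d e) :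
    Isometric (copies n d) (copies n e) := by
  have t := h.tensorCongr (fun _ : Fin n => (1 : F))
  simp only [one_mul] at t
  exact t

theorem Isometric.hyperbolic {d : ι → F} {e : κ → F} (h : Isometric d e) (he : Hyperbolic e) :
    Hyperbolic d := by
  obtain ⟨m, hm⟩ := he
  exact ⟨m, h.trans hm⟩

theorem Isometric.torsion {d : ι → F} {e : κ → F} (h : Isometric d e) (ht : Torsion e) :
    Torsion d := by
  obtain ⟨n, hn, hyp⟩ := ht
  exact ⟨n, hn, (h.copiesCongr n).hyperbolic hyp⟩

theorem sum_sq_eq_zero {ι : Type*} [Fintype ι] (hreal : ¬ IsSumSq (-1 : F)) (x : ι → F)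
    (h : ∑ i, x i ^ 2 = 0) (j : ι) : x j = 0 := by
  by_contra hj
  apply hreal
  rw [← Finset.add_sum_erase _ _ (Finset.mem_univ j)] at h
  have h1 : ∑ i ∈ Finset.univ.erase j, x i ^ 2 = -(x j ^ 2) :=
    eq_neg_of_add_eq_zero_right h
  have hx2 : x j ^ 2 ≠ 0 := pow_ne_zero _ hj
  have key : ∑ i ∈ Finset.univ.erase j, (x i / x j) ^ 2 = -1 := by
    simp only [div_pow]
    rw [← Finset.sum_div, h1, neg_div, div_self hx2]
  rw [← key]
  exact isSumSq_sum _ _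

end QF



/-- If `F` is formally real with `p(F) > 2^(ℓ-1)`, then there is an
anisotropic torsion `ℓ`-fold Pfister form over `F` (so `I^ℓ_t F ≠ 0`) and `u(F) ≥ 2^ℓ`. -/
theorem stmt3 (F : Type*) [Field F] (hchar : (2 : F) ≠ 0)
    (hreal : ¬ IsSumSq (-1 : F)) (ℓ : ℕ) (hl : 1 ≤ ℓ)
    (hp : ((2 ^ (ℓ - 1) : ℕ) : ℕ∞) < QF.pythNumber F) :
    (∃ a : Fin ℓ → F, (∀ i, a i ≠ 0) ∧
      QF.Anisotropic (QF.pfister a) ∧ QF.Torsion (QF.pfister a)) ∧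
    ((2 ^ ℓ : ℕ) : ℕ∞) ≤ QF.uInv F := by
  classical
  -- Step 1: extract a sum of squares that is not a sum of 2^(ℓ-1) squares
  have hex : ∃ s : F, IsSumSq s ∧ ¬ QF.IsSumSqOf (2 ^ (ℓ - 1)) s := by
    by_contra hcon
    push_neg at hcon
    have hmem : ((2 ^ (ℓ - 1) : ℕ) : ℕ∞) ∈
        {p : ℕ∞ | ∃ m : ℕ, p = (m : ℕ∞) ∧ ∀ x : F, IsSumSq x → QF.IsSumSqOf m x} :=
      ⟨2 ^ (ℓ - 1), rfl, hcon⟩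
    exact absurd (sInf_le hmem) (not_le.2 hp)
  obtain ⟨s, hsq, hs2⟩ := hex
  have hs0 : s ≠ 0 := fun h => hs2 (by rw [h]; exact QF.isSumSqOf_zero _)
  obtain ⟨N, hN⟩ := QF.IsSumSq.exists_isSumSqOf hsq
  have hl1 : ℓ - 1 + 1 = ℓ := Nat.succ_pred_eq_of_pos hl
  -- Step 2: the Pfister form ⟨⟨1,…,1,-s⟩⟩
  set lastI : Fin ℓ := ⟨ℓ - 1, by omega⟩ with hlastI
  set a : Fin ℓ → F := fun i => if i = lastI then -s else 1 with ha_def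
  have ha_ne : ∀ i, a i ≠ 0 := by
    intro i
    by_cases h : i = lastI
    · simp [ha_def, h, hs0]
    · simp [ha_def, h]
  have pf_eq : ∀ S : Finset (Fin ℓ), QF.pfister a S = if lastI ∈ S then -s else 1 := by
    intro S
    rw [show (QF.pfister a S) = ∏ i ∈ S, (if i = lastI then -s else 1) from rfl]
    exact Finset.prod_ite_eq' S lastI (fun _ => -s)
  -- cardinalities
  have hcard2 : Fintype.card (Finset (Fin ℓ)) = 2 ^ ℓ := by simp [Fintype.card_finset]
  have hcc : (Finset.univ.filter (fun S : Finset (Fin ℓ) => lastI ∈ S)).card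
      = (Finset.univ.filter (fun S : Finset (Fin ℓ) => ¬ lastI ∈ S)).card := by
    refine Finset.card_bij' (fun S _ => S.erase lastI) (fun S _ => insert lastI S)
      ?_ ?_ ?_ ?_
    · intro S hS
      simp only [Finset.mem_filter, Finset.mem_univ, true_and] at hS ⊢
      exact fun hmem => (Finset.notMem_erase _ _) hmem
    · intro S hS
      simp only [Finset.mem_filter, Finset.mem_univ, true_and] at hS ⊢
      exact Finset.mem_insert_self _ _
    · intro S hS
      simp only [Finset.mem_filter, Finset.mem_univ, true_and] at hS
      exact Finset.insert_erase hS
    · intro S hS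
      simp only [Finset.mem_filter, Finset.mem_univ, true_and] at hS
      exact Finset.erase_insert hS
  have hsum := Finset.card_filter_add_card_filter_not
    (s := (Finset.univ : Finset (Finset (Fin ℓ)))) (p := fun S => lastI ∈ S)
  have huniv : (Finset.univ : Finset (Finset (Fin ℓ))).card = 2 ^ ℓ := by
    rw [Finset.card_univ, hcard2]
  have hpow : 2 ^ ℓ = 2 ^ (ℓ - 1) + 2 ^ (ℓ - 1) := by
    conv_lhs => rw [← hl1]
    ring
  have hcP : Fintype.card {S : Finset (Fin ℓ) // lastI ∈ S} = 2 ^ (ℓ - 1) := by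
    rw [Fintype.card_subtype]
    omega
  have hcN : Fintype.card {S : Finset (Fin ℓ) // ¬ lastI ∈ S} = 2 ^ (ℓ - 1) := by
    rw [Fintype.card_subtype]
    omega
  -- the model form d0 and the reindexing isometry
  set d0 : (Fin (2 ^ (ℓ - 1)) ⊕ Fin (2 ^ (ℓ - 1))) → F :=
    QF.sumForm (fun _ => -s) (fun _ => 1) with hd0
  let E : (Fin (2 ^ (ℓ - 1)) ⊕ Fin (2 ^ (ℓ - 1))) ≃ Finset (Fin ℓ) :=
    (Equiv.sumCongr (Fintype.equivFinOfCardEq hcP).symm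
        (Fintype.equivFinOfCardEq hcN).symm).trans
      (Equiv.sumCompl (fun S : Finset (Fin ℓ) => lastI ∈ S))
  have form_eq : (fun x => QF.pfister a (E x)) = d0 := by
    funext x
    rcases x with i | i
    · have hmem : lastI ∈ E (Sum.inl i) := ((Fintype.equivFinOfCardEq hcP).symm i).2
      show QF.pfister a (E (Sum.inl i)) = -s
      rw [pf_eq, if_pos hmem]
    · have hmem : ¬ lastI ∈ E (Sum.inr i) := ((Fintype.equivFinOfCardEq hcN).symm i).2
      show QF.pfister a (E (Sum.inr i)) = 1
      rw [pf_eq, if_neg hmem]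
  have RI : QF.Isometric d0 (QF.pfister a) := by
    rw [← form_eq]
    exact QF.isometric_reindex E (QF.pfister a)
  -- Step 3: d0 is anisotropic
  have haniso : QF.Anisotropic d0 := by
    rintro ⟨v, hv, h0⟩
    rw [hd0, QF.qval_sumForm] at h0
    have hq1 : QF.qval (fun _ : Fin (2 ^ (ℓ - 1)) => -s) (v ∘ Sum.inl)
        = -(s * ∑ i : Fin (2 ^ (ℓ - 1)), (v (Sum.inl i)) ^ 2) := by
      show (∑ i : Fin (2 ^ (ℓ - 1)), -s * (v (Sum.inl i)) ^ 2) = _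
      rw [Finset.mul_sum, ← Finset.sum_neg_distrib]
      exact Finset.sum_congr rfl fun i _ => by ring
    have hq2 : QF.qval (fun _ : Fin (2 ^ (ℓ - 1)) => (1 : F)) (v ∘ Sum.inr)
        = ∑ i : Fin (2 ^ (ℓ - 1)), (v (Sum.inr i)) ^ 2 := by
      show (∑ i : Fin (2 ^ (ℓ - 1)), (1 : F) * (v (Sum.inr i)) ^ 2) = _
      exact Finset.sum_congr rfl fun i _ => one_mul _
    rw [hq1, hq2] at h0
    have hAB : (∑ i : Fin (2 ^ (ℓ - 1)), (v (Sum.inr i)) ^ 2)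
        = s * ∑ i : Fin (2 ^ (ℓ - 1)), (v (Sum.inl i)) ^ 2 := by
      linear_combination h0
    by_cases hB0 : (∑ i : Fin (2 ^ (ℓ - 1)), (v (Sum.inl i)) ^ 2) = 0
    · have hA0 : (∑ i : Fin (2 ^ (ℓ - 1)), (v (Sum.inr i)) ^ 2) = 0 := by
        rw [hAB, hB0, mul_zero]
      apply hv
      funext p
      rcases p with i | i
      · exact QF.sum_sq_eq_zero hreal (fun i => v (Sum.inl i)) hB0 i
      · exact QF.sum_sq_eq_zero hreal (fun i => v (Sum.inr i)) hA0 i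
    · apply hs2
      have h1 : QF.IsSumSqOf (2 ^ (ℓ - 1)) (∑ i : Fin (2 ^ (ℓ - 1)), (v (Sum.inr i)) ^ 2) :=
        ⟨fun i => v (Sum.inr i), rfl⟩
      have h2 : QF.IsSumSqOf (2 ^ (ℓ - 1)) (∑ i : Fin (2 ^ (ℓ - 1)), (v (Sum.inl i)) ^ 2) :=
        ⟨fun i => v (Sum.inl i), rfl⟩
      have h3 := (QF.isSumSqOf_mul (ℓ - 1) h1 h2 hB0).sq_mul
        ((∑ i : Fin (2 ^ (ℓ - 1)), (v (Sum.inl i)) ^ 2)⁻¹)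
      have h4 : ((∑ i : Fin (2 ^ (ℓ - 1)), (v (Sum.inl i)) ^ 2)⁻¹) ^ 2
          * ((∑ i : Fin (2 ^ (ℓ - 1)), (v (Sum.inr i)) ^ 2)
            * (∑ i : Fin (2 ^ (ℓ - 1)), (v (Sum.inl i)) ^ 2)) = s := by
        rw [hAB]
        field_simp
      rwa [h4] at h3
  -- Step 4: d0 is torsion
  have htor : QF.Torsion d0 := by
    have hNle : N ≤ 2 ^ (N + (ℓ - 1)) :=
      le_trans (Nat.le_of_lt (Nat.lt_two_pow_self (n := N)))
        (Nat.pow_le_pow_right (by norm_num) (Nat.le_add_right _ _))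
    have hsM : QF.IsSumSqOf (2 ^ (N + (ℓ - 1))) s := hN.mono hNle
    have R := QF.round (N + (ℓ - 1)) s hs0 hsM
    have J : QF.Isometric (fun _ : Fin (2 ^ (N + (ℓ - 1))) => -s)
        (fun _ : Fin (2 ^ (N + (ℓ - 1))) => (-1 : F)) := by
      have t := R.smul (-1)
      have e1 : (fun _ : Fin (2 ^ (N + (ℓ - 1))) => (-1 : F) * 1)
          = (fun _ : Fin (2 ^ (N + (ℓ - 1))) => (-1 : F)) := by funext i; ring
      have e2 : (fun _ : Fin (2 ^ (N + (ℓ - 1))) => (-1 : F) * s)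
          = (fun _ : Fin (2 ^ (N + (ℓ - 1))) => -s) := by funext i; ring
      rw [e1, e2] at t
      exact t.symm
    have hMn : 2 ^ (N + (ℓ - 1)) = 2 ^ N * 2 ^ (ℓ - 1) := pow_add 2 N (ℓ - 1)
    let E2 : (Fin (2 ^ (N + (ℓ - 1))) ⊕ Fin (2 ^ (N + (ℓ - 1))))
        ≃ (Fin (2 ^ N) × (Fin (2 ^ (ℓ - 1)) ⊕ Fin (2 ^ (ℓ - 1)))) :=
      (Equiv.sumCongr ((finCongr hMn).trans finProdFinEquiv.symm)
          ((finCongr hMn).trans finProdFinEquiv.symm)).trans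
        (Equiv.prodSumDistrib (Fin (2 ^ N)) (Fin (2 ^ (ℓ - 1))) (Fin (2 ^ (ℓ - 1)))).symm
    have form_eq2 : (fun x => QF.copies (2 ^ N) d0 (E2 x))
        = QF.sumForm (fun _ : Fin (2 ^ (N + (ℓ - 1))) => -s)
          (fun _ : Fin (2 ^ (N + (ℓ - 1))) => (1 : F)) := by
      funext x
      rcases x with q | q <;> rfl
    have RA : QF.Isometric (QF.sumForm (fun _ : Fin (2 ^ (N + (ℓ - 1))) => -s)
        (fun _ : Fin (2 ^ (N + (ℓ - 1))) => (1 : F))) (QF.copies (2 ^ N) d0) := by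
      rw [← form_eq2]
      exact QF.isometric_reindex E2 _
    have comm_eq : (fun x => QF.sumForm (fun _ : Fin (2 ^ (N + (ℓ - 1))) => (1 : F))
          (fun _ : Fin (2 ^ (N + (ℓ - 1))) => -s)
          ((Equiv.sumComm (Fin (2 ^ (N + (ℓ - 1)))) (Fin (2 ^ (N + (ℓ - 1))))) x))
        = QF.sumForm (fun _ : Fin (2 ^ (N + (ℓ - 1))) => -s)
          (fun _ : Fin (2 ^ (N + (ℓ - 1))) => (1 : F)) := by
      funext x
      rcases x with q | q <;> rfl
    have RB : QF.Isometric (QF.sumForm (fun _ : Fin (2 ^ (N + (ℓ - 1))) => -s)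
          (fun _ : Fin (2 ^ (N + (ℓ - 1))) => (1 : F)))
        (QF.sumForm (fun _ : Fin (2 ^ (N + (ℓ - 1))) => (1 : F))
          (fun _ : Fin (2 ^ (N + (ℓ - 1))) => -s)) := by
      rw [← comm_eq]
      exact QF.isometric_reindex (Equiv.sumComm _ _) _
    have RC : QF.Isometric (QF.sumForm (fun _ : Fin (2 ^ (N + (ℓ - 1))) => (1 : F))
          (fun _ : Fin (2 ^ (N + (ℓ - 1))) => -s)) (QF.hypForm F (2 ^ (N + (ℓ - 1)))) := by
      have hhyp : QF.hypForm F (2 ^ (N + (ℓ - 1)))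
          = QF.sumForm (fun _ : Fin (2 ^ (N + (ℓ - 1))) => (1 : F))
            (fun _ : Fin (2 ^ (N + (ℓ - 1))) => (-1 : F)) := rfl
      rw [hhyp]
      exact (QF.Isometric.refl _).sumCongr J
    exact ⟨2 ^ N, Nat.one_le_two_pow, 2 ^ (N + (ℓ - 1)), RA.symm.trans (RB.trans RC)⟩
  -- Step 5: transport to the Pfister form and conclude
  have hA_pf : QF.Anisotropic (QF.pfister a) := RI.symm.anisotropic haniso
  have hT_pf : QF.Torsion (QF.pfister a) := RI.symm.torsion htor
  refine ⟨⟨a, ha_ne, hA_pf, hT_pf⟩, ?_⟩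
  let eqF : Fin (2 ^ ℓ) ≃ Finset (Fin ℓ) := (Fintype.equivFinOfCardEq hcard2).symm
  have RIF : QF.Isometric (fun i => QF.pfister a (eqF i)) (QF.pfister a) :=
    QF.isometric_reindex eqF _
  exact le_sSup ⟨2 ^ ℓ, fun i => QF.pfister a (eqF i),
    RIF.anisotropic hA_pf, RIF.torsion hT_pf, by push_cast; rfl⟩
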